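/- Let (G,Δ,ε,φ,S,α,β) be a finite-dimensional quasi-Hopf algebra over a field k with invertible antipode S, and define p_λ := Yⁱ·S⁻¹(Xⁱ·β) ⊗ Zⁱ, p_ρ := Pⁱ ⊗ Qⁱ·β·S(Rⁱ), q_λ := S(Pⁱ)·α·Qⁱ ⊗ Rⁱ, q_ρ := Xⁱ ⊗ S⁻¹(α·Zⁱ)·Yⁱ, where φ = Xⁱ⊗Yⁱ⊗Zⁱ and φ⁻¹ = Pⁱ⊗Qⁱ⊗Rⁱ (implicit summation). Then for all a ∈ G (with Sweedler notation Δ(a)=a₍₁₎⊗a₍₂₎): (1) Δ(a₍₂₎)·p_λ·[S⁻¹(a₍₁₎)⊗1] = p_λ·[1⊗a]; (2) Δ(a₍₁₎)·p_ρ·[1⊗S(a₍₂₎)] = p_ρ·[a⊗1]; (3) [S(a₍₁₎)⊗1]·q_λ·Δ(a₍₂₎) = [1⊗a]·q_λ; (4) [1⊗S⁻¹(a₍₂₎)]·q_ρ·Δ(a₍₁₎) = [a⊗1]·q_ρ. -/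

import Mathlib

open TensorProduct

set_option maxSynthPendingDepth 8
set_option synthInstance.maxHeartbeats 1000000
set_option maxHeartbeats 1000000

noncomputable section

namespace QHA

variable (k G : Type) [Field k] [Ring G] [Algebra k G]

/-- The data of a (finite-dimensional) quasi-Hopf algebra: coproduct, counit,
reassociator (together with its inverse), antipode (as an invertible linear map)
and the elements `α`, `β`. -/
structure QuasiHopfData : Type where
  Δ : G →ₐ[k] G ⊗[k] G
  ε : G →ₐ[k] k
  φ : G ⊗[k] (G ⊗[k] G)
  φ' : G ⊗[k] (G ⊗[k] G)
  S : G ≃ₗ[k] G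
  α : G
  β : G

/-- Swap of legs 2 and 3 of the triple tensor product. -/
def c23 : G ⊗[k] (G ⊗[k] G) →ₐ[k] G ⊗[k] (G ⊗[k] G) :=
  Algebra.TensorProduct.map (AlgHom.id k G) (Algebra.TensorProduct.comm k G G).toAlgHom

/-- Swap of legs 1 and 2 of the triple tensor product. -/
def c12 : G ⊗[k] (G ⊗[k] G) →ₐ[k] G ⊗[k] (G ⊗[k] G) :=
  ((Algebra.TensorProduct.assoc k k k G G G).toAlgHom.comp
    (Algebra.TensorProduct.map (Algebra.TensorProduct.comm k G G).toAlgHom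
      (AlgHom.id k G))).comp
    (Algebra.TensorProduct.assoc k k k G G G).symm.toAlgHom

/-- Place an element of `G ⊗ G` in legs 1,2 of `G ⊗ G ⊗ G`. -/
def e12 : G ⊗[k] G →ₐ[k] G ⊗[k] (G ⊗[k] G) :=
  Algebra.TensorProduct.map (AlgHom.id k G) Algebra.TensorProduct.includeLeft

/-- Place an element of `G ⊗ G` in legs 1,3 of `G ⊗ G ⊗ G`. -/
def e13 : G ⊗[k] G →ₐ[k] G ⊗[k] (G ⊗[k] G) :=
  Algebra.TensorProduct.map (AlgHom.id k G) Algebra.TensorProduct.includeRight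

/-- Place an element of `G ⊗ G` in legs 2,3 of `G ⊗ G ⊗ G`. -/
def e23 : G ⊗[k] G →ₐ[k] G ⊗[k] (G ⊗[k] G) :=
  Algebra.TensorProduct.includeRight

/-- `ψ ⊗ 1`, an element of `G ⊗ G ⊗ G` placed in legs 1,2,3 of the 4-fold
tensor product. -/
def padR (ψ : G ⊗[k] (G ⊗[k] G)) : G ⊗[k] (G ⊗[k] (G ⊗[k] G)) :=
  (Algebra.TensorProduct.map (AlgHom.id k G) (Algebra.TensorProduct.assoc k k k G G G).toAlgHom)
    ((Algebra.TensorProduct.assoc k k k G (G ⊗[k] G) G) (ψ ⊗ₜ[k] (1:G)))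

/-- The product on the tensor product of two (not necessarily unital/associative)
algebras given by bilinear multiplications `mV`, `mW`. -/
def mulTens {V W : Type} [AddCommGroup V] [Module k V] [AddCommGroup W] [Module k W]
    (mV : V →ₗ[k] V →ₗ[k] V) (mW : W →ₗ[k] W →ₗ[k] W) :
    (V ⊗[k] W) →ₗ[k] (V ⊗[k] W) →ₗ[k] (V ⊗[k] W) :=
  TensorProduct.curry ((TensorProduct.map (TensorProduct.lift mV) (TensorProduct.lift mW)) ∘ₗ
    (TensorProduct.tensorTensorTensorComm k V W V W).toLinearMap)

/-- The functional `x ↦ χ (d * x * c)`; this is `c ⇀ χ ↼ d` in Hopf algebra notation. -/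
def shiftF (c d : G) (χ : Module.Dual k G) : Module.Dual k G :=
  χ ∘ₗ (LinearMap.mulLeft k d) ∘ₗ (LinearMap.mulRight k c)

namespace QuasiHopfData

variable {k G}
variable (H : QuasiHopfData k G)

/-- The opposite coproduct `Δᵒᵖ = τ ∘ Δ`. -/
def Δop : G →ₐ[k] G ⊗[k] G := (Algebra.TensorProduct.comm k G G).toAlgHom.comp H.Δ

/-- `(id ⊗ Δ) ∘ Δ`. -/
def ΔR : G →ₐ[k] G ⊗[k] (G ⊗[k] G) :=
  (Algebra.TensorProduct.map (AlgHom.id k G) H.Δ).comp H.Δ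

/-- `(Δ ⊗ id) ∘ Δ` (reassociated); this is the two-sided coaction `δ`. -/
def ΔL : G →ₐ[k] G ⊗[k] (G ⊗[k] G) :=
  ((Algebra.TensorProduct.assoc k k k G G G).toAlgHom.comp
    (Algebra.TensorProduct.map H.Δ (AlgHom.id k G))).comp H.Δ

/-- `id ⊗ id ⊗ Δ` on the triple tensor product. -/
def ooΔ : G ⊗[k] (G ⊗[k] G) →ₐ[k] G ⊗[k] (G ⊗[k] (G ⊗[k] G)) :=
  Algebra.TensorProduct.map (AlgHom.id k G) (Algebra.TensorProduct.map (AlgHom.id k G) H.Δ)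

/-- `Δ ⊗ id ⊗ id` on the triple tensor product. -/
def Δoo : G ⊗[k] (G ⊗[k] G) →ₐ[k] G ⊗[k] (G ⊗[k] (G ⊗[k] G)) :=
  (Algebra.TensorProduct.assoc k k k G G (G ⊗[k] G)).toAlgHom.comp
    (Algebra.TensorProduct.map H.Δ (AlgHom.id k (G ⊗[k] G)))

/-- `id ⊗ Δ ⊗ id` on the triple tensor product. -/
def oΔo : G ⊗[k] (G ⊗[k] G) →ₐ[k] G ⊗[k] (G ⊗[k] (G ⊗[k] G)) :=
  (Algebra.TensorProduct.map (AlgHom.id k G)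
      (Algebra.TensorProduct.assoc k k k G G G).toAlgHom).comp
    (Algebra.TensorProduct.map (AlgHom.id k G)
      (Algebra.TensorProduct.map H.Δ (AlgHom.id k G)))

/-- Contraction of the first tensor leg with the counit. -/
def κ1 (M : Type) [Ring M] [Algebra k M] : G ⊗[k] M →ₐ[k] M :=
  (Algebra.TensorProduct.lid k M).toAlgHom.comp
    (Algebra.TensorProduct.map H.ε (AlgHom.id k M))

/-- Contraction of the last tensor leg with the counit. -/
def κ2 (M : Type) [Ring M] [Algebra k M] : M ⊗[k] G →ₐ[k] M :=
  (Algebra.TensorProduct.rid k k M).toAlgHom.comp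
    (Algebra.TensorProduct.map (AlgHom.id k M) H.ε)

/-- The multiplication on the dual space `Ĝ`, `⟨χξ, a⟩ = ⟨χ ⊗ ξ, Δ(a)⟩`. -/
def dmul (χ ξ : Module.Dual k G) : Module.Dual k G :=
  ((LinearMap.mul' k k) ∘ₗ (TensorProduct.map χ ξ)) ∘ₗ H.Δ.toLinearMap

/-- The axioms of a quasi-Hopf algebra for the data `H`. -/
structure IsQuasiHopf : Prop where
  S_mul : ∀ a b : G, H.S (a * b) = H.S b * H.S a
  S_one : H.S 1 = 1
  φ_mul_inv : H.φ * H.φ' = 1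
  φ_inv_mul : H.φ' * H.φ = 1
  Δ_assoc : ∀ a : G, H.ΔR a * H.φ = H.φ * H.ΔL a
  pentagon : H.ooΔ H.φ * H.Δoo H.φ =
    ((1:G) ⊗ₜ[k] H.φ) * H.oΔo H.φ * QHA.padR k G H.φ
  counit_left : ∀ a : G, H.κ1 G (H.Δ a) = a
  counit_right : ∀ a : G, H.κ2 G (H.Δ a) = a
  counit_mid : (Algebra.TensorProduct.map (AlgHom.id k G) (H.κ1 G)) H.φ = 1
  antipode_left : ∀ a : G,
    (LinearMap.mul' k G) (TensorProduct.map
      ((LinearMap.mulRight k H.α) ∘ₗ H.S.toLinearMap) LinearMap.id (H.Δ a)) = H.ε a • H.α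
  antipode_right : ∀ a : G,
    (LinearMap.mul' k G) (TensorProduct.map
      (LinearMap.mulRight k H.β) H.S.toLinearMap (H.Δ a)) = H.ε a • H.β
  antipode_φ :
    (LinearMap.mul' k G) (TensorProduct.map (LinearMap.mulRight k H.β)
      ((LinearMap.mul' k G) ∘ₗ (TensorProduct.map
        ((LinearMap.mulRight k H.α) ∘ₗ H.S.toLinearMap) LinearMap.id)) H.φ) = 1
  antipode_φ' :
    (LinearMap.mul' k G) (TensorProduct.map
      ((LinearMap.mulRight k H.α) ∘ₗ H.S.toLinearMap)
      ((LinearMap.mul' k G) ∘ₗ (TensorProduct.map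
        (LinearMap.mulRight k H.β) H.S.toLinearMap)) H.φ') = 1

/-- Quasitriangularity of an element `R` (with specified two-sided inverse `Rinv`)
for the quasi-Hopf algebra `H`:  the intertwining property and the two hexagon
relations, with the leg-numbering conventions of the paper. -/
structure IsQT (R Rinv : G ⊗[k] G) : Prop where
  mul_inv : R * Rinv = 1
  inv_mul : Rinv * R = 1
  intertwine : ∀ a : G, H.Δop a * R = R * H.Δ a
  hexagon1 : (Algebra.TensorProduct.assoc k k k G G G)
      ((Algebra.TensorProduct.map H.Δ (AlgHom.id k G)) R)
    = QHA.c23 k G (QHA.c12 k G H.φ) * QHA.e13 k G R * QHA.c23 k G H.φ' *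
      QHA.e23 k G R * H.φ
  hexagon2 : (Algebra.TensorProduct.map (AlgHom.id k G) H.Δ) R
    = QHA.c12 k G (QHA.c23 k G H.φ') * QHA.e13 k G R * QHA.c12 k G H.φ *
      QHA.e12 k G R * H.φ'

end QuasiHopfData

end QHA

section HNhelpers

open QHA TensorProduct

variable {k G : Type} [Field k] [Ring G] [Algebra k G] (H : QHA.QuasiHopfData k G)

/-- `x ⊗ (y ⊗ z) ↦ (y * S⁻¹(x β)) ⊗ z`. -/
noncomputable def Fl : G ⊗[k] (G ⊗[k] G) →ₗ[k] G ⊗[k] G :=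
  (LinearMap.rTensor G (LinearMap.mul' k G ∘ₗ
      TensorProduct.map LinearMap.id (H.S.symm.toLinearMap ∘ₗ LinearMap.mulRight k H.β) ∘ₗ
      (TensorProduct.comm k G G).toLinearMap)) ∘ₗ
    (TensorProduct.assoc k G G G).symm.toLinearMap

@[simp] lemma Fl_tmul (x y z : G) :
    Fl H (x ⊗ₜ[k] (y ⊗ₜ[k] z)) = (y * H.S.symm (x * H.β)) ⊗ₜ[k] z := by
  simp [Fl]

/-- `x ⊗ (y ⊗ z) ↦ (S x * α * y) ⊗ z`. -/
noncomputable def El : G ⊗[k] (G ⊗[k] G) →ₗ[k] G ⊗[k] G :=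
  (LinearMap.rTensor G (LinearMap.mul' k G ∘ₗ
      TensorProduct.map (LinearMap.mulRight k H.α ∘ₗ H.S.toLinearMap) LinearMap.id)) ∘ₗ
    (TensorProduct.assoc k G G G).symm.toLinearMap

@[simp] lemma El_tmul (x y z : G) :
    El H (x ⊗ₜ[k] (y ⊗ₜ[k] z)) = (H.S x * H.α * y) ⊗ₜ[k] z := by
  simp [El]

/-- `x ⊗ (y ⊗ z) ↦ x ⊗ (y * β * S z)`. -/
noncomputable def Fr : G ⊗[k] (G ⊗[k] G) →ₗ[k] G ⊗[k] G :=
  LinearMap.lTensor G (LinearMap.mul' k G ∘ₗ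
    TensorProduct.map (LinearMap.mulRight k H.β) H.S.toLinearMap)

@[simp] lemma Fr_tmul (x y z : G) :
    Fr H (x ⊗ₜ[k] (y ⊗ₜ[k] z)) = x ⊗ₜ[k] (y * H.β * H.S z) := by
  simp [Fr]

/-- `x ⊗ (y ⊗ z) ↦ x ⊗ (S⁻¹(α z) * y)`. -/
noncomputable def Er : G ⊗[k] (G ⊗[k] G) →ₗ[k] G ⊗[k] G :=
  LinearMap.lTensor G (LinearMap.mul' k G ∘ₗ
    TensorProduct.map (H.S.symm.toLinearMap ∘ₗ LinearMap.mulLeft k H.α) LinearMap.id ∘ₗ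
    (TensorProduct.comm k G G).toLinearMap)

@[simp] lemma Er_tmul (x y z : G) :
    Er H (x ⊗ₜ[k] (y ⊗ₜ[k] z)) = x ⊗ₜ[k] (H.S.symm (H.α * z) * y) := by
  simp [Er]

/-- Contraction `c ⊗ d ↦ d * S⁻¹(c β)`. -/
noncomputable def AS1 : G ⊗[k] G →ₗ[k] G :=
  LinearMap.mul' k G ∘ₗ
    TensorProduct.map LinearMap.id (H.S.symm.toLinearMap ∘ₗ LinearMap.mulRight k H.β) ∘ₗ
    (TensorProduct.comm k G G).toLinearMap

@[simp] lemma AS1_tmul (c d : G) : AS1 H (c ⊗ₜ[k] d) = d * H.S.symm (c * H.β) := by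
  simp [AS1]

/-- Contraction `c ⊗ d ↦ c * β * S d`. -/
noncomputable def AS2 : G ⊗[k] G →ₗ[k] G :=
  LinearMap.mul' k G ∘ₗ TensorProduct.map (LinearMap.mulRight k H.β) H.S.toLinearMap

@[simp] lemma AS2_tmul (c d : G) : AS2 H (c ⊗ₜ[k] d) = c * H.β * H.S d := by
  simp [AS2]

/-- Contraction `c ⊗ d ↦ S c * α * d`. -/
noncomputable def AS3 : G ⊗[k] G →ₗ[k] G :=
  LinearMap.mul' k G ∘ₗ
    TensorProduct.map (LinearMap.mulRight k H.α ∘ₗ H.S.toLinearMap) LinearMap.id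

@[simp] lemma AS3_tmul (c d : G) : AS3 H (c ⊗ₜ[k] d) = H.S c * H.α * d := by
  simp [AS3]

/-- Contraction `c ⊗ d ↦ S⁻¹(α d) * c`. -/
noncomputable def AS4 : G ⊗[k] G →ₗ[k] G :=
  LinearMap.mul' k G ∘ₗ
    TensorProduct.map (H.S.symm.toLinearMap ∘ₗ LinearMap.mulLeft k H.α) LinearMap.id ∘ₗ
    (TensorProduct.comm k G G).toLinearMap

@[simp] lemma AS4_tmul (c d : G) : AS4 H (c ⊗ₜ[k] d) = H.S.symm (H.α * d) * c := by
  simp [AS4]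

variable (hH : H.IsQuasiHopf)
include hH

lemma Ssymm_mul (a b : G) : H.S.symm (a * b) = H.S.symm b * H.S.symm a := by
  apply H.S.injective
  rw [LinearEquiv.apply_symm_apply, hH.S_mul, LinearEquiv.apply_symm_apply,
    LinearEquiv.apply_symm_apply]

lemma AS2_Δ (b : G) : AS2 H (H.Δ b) = H.ε b • H.β := by
  simpa [AS2] using hH.antipode_right b

lemma AS3_Δ (b : G) : AS3 H (H.Δ b) = H.ε b • H.α := by
  simpa [AS3] using hH.antipode_left b

lemma AS1_Δ (b : G) : AS1 H (H.Δ b) = H.ε b • H.S.symm H.β := by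
  have key : ∀ w : G ⊗[k] G, AS1 H w = H.S.symm (AS2 H w) := by
    intro w
    induction w using TensorProduct.induction_on with
    | zero => simp
    | tmul c d => simp [Ssymm_mul H hH]
    | add u v hu hv => simp [hu, hv]
  rw [key, AS2_Δ H hH, map_smul]

lemma AS4_Δ (b : G) : AS4 H (H.Δ b) = H.ε b • H.S.symm H.α := by
  have key : ∀ w : G ⊗[k] G, AS4 H w = H.S.symm (AS3 H w) := by
    intro w
    induction w using TensorProduct.induction_on with
    | zero => simp
    | tmul c d => simp [Ssymm_mul H hH, mul_assoc]
    | add u v hu hv => simp [hu, hv]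
  rw [key, AS3_Δ H hH, map_smul]

/- product lemmas for the four maps -/

lemma Fl_A (u x y z : G) (w : G ⊗[k] G) :
    Fl H ((u ⊗ₜ[k] w) * (x ⊗ₜ[k] (y ⊗ₜ[k] z)))
      = w * ((y * H.S.symm (u * x * H.β)) ⊗ₜ[k] z) := by
  induction w using TensorProduct.induction_on with
  | zero => simp
  | tmul c d =>
      simp [Algebra.TensorProduct.tmul_mul_tmul, mul_assoc]
  | add w₁ w₂ h₁ h₂ =>
      simp only [TensorProduct.tmul_add, add_mul, map_add, h₁, h₂]

lemma Fl_B (x y z c : G) (w : G ⊗[k] G) :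
    Fl H ((x ⊗ₜ[k] (y ⊗ₜ[k] z)) * ((Algebra.TensorProduct.assoc k k k G G G) (w ⊗ₜ[k] c)))
      = (y * AS1 H w * H.S.symm x) ⊗ₜ[k] (z * c) := by
  induction w using TensorProduct.induction_on with
  | zero => simp
  | tmul b₁ b₂ =>
      simp [Algebra.TensorProduct.tmul_mul_tmul, Ssymm_mul H hH, mul_assoc]
  | add w₁ w₂ h₁ h₂ =>
      simp only [map_add, TensorProduct.add_tmul, mul_add, add_mul, h₁, h₂,
        TensorProduct.add_tmul]

lemma Fr_A (x y z u : G) (w : G ⊗[k] G) :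
    Fr H ((x ⊗ₜ[k] (y ⊗ₜ[k] z)) * (u ⊗ₜ[k] w))
      = (x * u) ⊗ₜ[k] (y * AS2 H w * H.S z) := by
  induction w using TensorProduct.induction_on with
  | zero => simp
  | tmul c d =>
      simp [Algebra.TensorProduct.tmul_mul_tmul, hH.S_mul, mul_assoc]
  | add w₁ w₂ h₁ h₂ =>
      simp only [TensorProduct.tmul_add, mul_add, map_add, h₁, h₂, add_mul,
        TensorProduct.tmul_add]

lemma Fr_B (x y z c : G) (w : G ⊗[k] G) :
    Fr H (((Algebra.TensorProduct.assoc k k k G G G) (w ⊗ₜ[k] c)) * (x ⊗ₜ[k] (y ⊗ₜ[k] z)))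
      = w * (x ⊗ₜ[k] (y * H.β * H.S z)) * ((1:G) ⊗ₜ[k] H.S c) := by
  induction w using TensorProduct.induction_on with
  | zero => simp
  | tmul b₁ b₂ =>
      simp [Algebra.TensorProduct.tmul_mul_tmul, hH.S_mul, mul_assoc]
  | add w₁ w₂ h₁ h₂ =>
      simp only [map_add, TensorProduct.add_tmul, add_mul, h₁, h₂]

lemma El_A (x y z c : G) (w : G ⊗[k] G) :
    El H (((Algebra.TensorProduct.assoc k k k G G G) (w ⊗ₜ[k] c)) * (x ⊗ₜ[k] (y ⊗ₜ[k] z)))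
      = (H.S x * AS3 H w * y) ⊗ₜ[k] (c * z) := by
  induction w using TensorProduct.induction_on with
  | zero => simp
  | tmul b₁ b₂ =>
      simp [Algebra.TensorProduct.tmul_mul_tmul, hH.S_mul, mul_assoc]
  | add w₁ w₂ h₁ h₂ =>
      simp only [map_add, TensorProduct.add_tmul, add_mul, mul_add, h₁, h₂]

lemma El_B (x y z u : G) (w : G ⊗[k] G) :
    El H ((x ⊗ₜ[k] (y ⊗ₜ[k] z)) * (u ⊗ₜ[k] w))
      = (H.S u ⊗ₜ[k] (1:G)) * ((H.S x * H.α * y) ⊗ₜ[k] z) * w := by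
  induction w using TensorProduct.induction_on with
  | zero => simp
  | tmul c d =>
      simp [Algebra.TensorProduct.tmul_mul_tmul, hH.S_mul, mul_assoc]
  | add w₁ w₂ h₁ h₂ =>
      simp only [TensorProduct.tmul_add, mul_add, map_add, h₁, h₂]

lemma Er_A (u x y z : G) (w : G ⊗[k] G) :
    Er H ((u ⊗ₜ[k] w) * (x ⊗ₜ[k] (y ⊗ₜ[k] z)))
      = (u * x) ⊗ₜ[k] (H.S.symm z * AS4 H w * y) := by
  induction w using TensorProduct.induction_on with
  | zero => simp
  | tmul c d =>
      simp [Algebra.TensorProduct.tmul_mul_tmul, Ssymm_mul H hH, mul_assoc]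
  | add w₁ w₂ h₁ h₂ =>
      simp only [TensorProduct.tmul_add, add_mul, map_add, h₁, h₂, mul_add,
        TensorProduct.tmul_add]

lemma Er_B (x y z c : G) (w : G ⊗[k] G) :
    Er H ((x ⊗ₜ[k] (y ⊗ₜ[k] z)) * ((Algebra.TensorProduct.assoc k k k G G G) (w ⊗ₜ[k] c)))
      = ((1:G) ⊗ₜ[k] H.S.symm c) * (x ⊗ₜ[k] (H.S.symm (H.α * z) * y)) * w := by
  induction w using TensorProduct.induction_on with
  | zero => simp
  | tmul b₁ b₂ =>
      simp [Algebra.TensorProduct.tmul_mul_tmul, Ssymm_mul H hH, mul_assoc]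
  | add w₁ w₂ h₁ h₂ =>
      simp only [map_add, TensorProduct.add_tmul, mul_add, add_mul, h₁, h₂]

lemma inv_intertwine (a : G) : H.ΔL a * H.φ' = H.φ' * H.ΔR a := by
  have h := hH.Δ_assoc a
  calc H.ΔL a * H.φ' = (H.φ' * H.φ) * (H.ΔL a * H.φ') := by rw [hH.φ_inv_mul, one_mul]
    _ = H.φ' * (H.φ * H.ΔL a) * H.φ' := by noncomm_ring
    _ = H.φ' * (H.ΔR a * H.φ) * H.φ' := by rw [h]
    _ = (H.φ' * H.ΔR a) * (H.φ * H.φ') := by noncomm_ring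
    _ = H.φ' * H.ΔR a := by rw [hH.φ_mul_inv, mul_one]

end HNhelpers

open QHA in
/-- The commutation relations of `p_λ, p_ρ, q_λ, q_ρ` with the
coproduct (Eq. (2.26) of the paper), for all `a ∈ G`, in Sweedler notation. -/
theorem statement5
    (k G : Type) [Field k] [Ring G] [Algebra k G] [FiniteDimensional k G]
    (H : QuasiHopfData k G) (hH : H.IsQuasiHopf)
    (ι ι' : Type) [Fintype ι] [Fintype ι']
    (X Y Z : ι → G) (P Q R₀ : ι' → G)
    (hφ : H.φ = ∑ i : ι, X i ⊗ₜ[k] (Y i ⊗ₜ[k] Z i))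
    (hφ' : H.φ' = ∑ i : ι', P i ⊗ₜ[k] (Q i ⊗ₜ[k] R₀ i))
    (pL pR qL qR : G ⊗[k] G)
    (hpL : pL = ∑ i : ι, (Y i * H.S.symm (X i * H.β)) ⊗ₜ[k] Z i)
    (hpR : pR = ∑ i : ι', P i ⊗ₜ[k] (Q i * H.β * H.S (R₀ i)))
    (hqL : qL = ∑ i : ι', (H.S (P i) * H.α * Q i) ⊗ₜ[k] R₀ i)
    (hqR : qR = ∑ i : ι, X i ⊗ₜ[k] (H.S.symm (H.α * Z i) * Y i)) :
    ∀ a : G, ∀ (κ : Type) [Fintype κ], ∀ a1 a2 : κ → G,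
      H.Δ a = ∑ m : κ, a1 m ⊗ₜ[k] a2 m →
      (∑ m : κ, H.Δ (a2 m) * pL * (H.S.symm (a1 m) ⊗ₜ[k] (1:G))
          = pL * ((1:G) ⊗ₜ[k] a)) ∧
      (∑ m : κ, H.Δ (a1 m) * pR * ((1:G) ⊗ₜ[k] H.S (a2 m))
          = pR * (a ⊗ₜ[k] (1:G))) ∧
      (∑ m : κ, (H.S (a1 m) ⊗ₜ[k] (1:G)) * qL * H.Δ (a2 m)
          = ((1:G) ⊗ₜ[k] a) * qL) ∧
      (∑ m : κ, ((1:G) ⊗ₜ[k] H.S.symm (a2 m)) * qR * H.Δ (a1 m)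
          = (a ⊗ₜ[k] (1:G)) * qR) := by
  intro a κ _ a1 a2 hΔ
  have hΔR : H.ΔR a = ∑ m : κ, a1 m ⊗ₜ[k] H.Δ (a2 m) := by
    simp [QHA.QuasiHopfData.ΔR, hΔ, map_sum]
  have hΔL : H.ΔL a
      = ∑ m : κ, (Algebra.TensorProduct.assoc k k k G G G) (H.Δ (a1 m) ⊗ₜ[k] a2 m) := by
    simp [QHA.QuasiHopfData.ΔL, hΔ, map_sum]
  have hεl : ∑ m : κ, H.ε (a1 m) • a2 m = a := by
    have h := hH.counit_left a
    rw [hΔ] at h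
    simpa [QHA.QuasiHopfData.κ1] using h
  have hεr : ∑ m : κ, H.ε (a2 m) • a1 m = a := by
    have h := hH.counit_right a
    rw [hΔ] at h
    simpa [QHA.QuasiHopfData.κ2] using h
  refine ⟨?_, ?_, ?_, ?_⟩
  · -- p_λ
    calc ∑ m : κ, H.Δ (a2 m) * pL * (H.S.symm (a1 m) ⊗ₜ[k] (1:G))
        = Fl H (H.ΔR a * H.φ) := by
          rw [hΔR, hφ, Finset.sum_mul_sum, map_sum]
          refine Finset.sum_congr rfl fun m _ => ?_
          rw [map_sum, hpL, Finset.mul_sum, Finset.sum_mul]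
          refine Finset.sum_congr rfl fun i _ => ?_
          rw [Fl_A H hH]
          simp [Algebra.TensorProduct.tmul_mul_tmul, Ssymm_mul H hH, mul_assoc]
      _ = Fl H (H.φ * H.ΔL a) := by rw [hH.Δ_assoc]
      _ = pL * ((1:G) ⊗ₜ[k] a) := by
          rw [hφ, hΔL, Finset.sum_mul_sum, map_sum, hpL, Finset.sum_mul]
          refine Finset.sum_congr rfl fun i _ => ?_
          rw [map_sum, Algebra.TensorProduct.tmul_mul_tmul, mul_one, ← hεl,
            Finset.mul_sum, TensorProduct.tmul_sum]
          refine Finset.sum_congr rfl fun m _ => ?_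
          rw [Fl_B H hH, AS1_Δ H hH]
          simp [mul_smul_comm, smul_mul_assoc, TensorProduct.smul_tmul',
            TensorProduct.tmul_smul, Ssymm_mul H hH, mul_assoc]
  · -- p_ρ
    calc ∑ m : κ, H.Δ (a1 m) * pR * ((1:G) ⊗ₜ[k] H.S (a2 m))
        = Fr H (H.ΔL a * H.φ') := by
          rw [hΔL, hφ', Finset.sum_mul_sum, map_sum]
          refine Finset.sum_congr rfl fun m _ => ?_
          rw [map_sum, hpR, Finset.mul_sum, Finset.sum_mul]
          refine Finset.sum_congr rfl fun i _ => ?_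
          rw [Fr_B H hH]
      _ = Fr H (H.φ' * H.ΔR a) := by rw [inv_intertwine H hH]
      _ = pR * (a ⊗ₜ[k] (1:G)) := by
          rw [hφ', hΔR, Finset.sum_mul_sum, map_sum, hpR, Finset.sum_mul]
          refine Finset.sum_congr rfl fun i _ => ?_
          rw [map_sum, Algebra.TensorProduct.tmul_mul_tmul, mul_one, ← hεr,
            Finset.mul_sum, TensorProduct.sum_tmul]
          refine Finset.sum_congr rfl fun m _ => ?_
          rw [Fr_A H hH, AS2_Δ H hH]
          simp [mul_smul_comm, smul_mul_assoc, TensorProduct.smul_tmul', mul_assoc]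
  · -- q_λ
    calc ∑ m : κ, (H.S (a1 m) ⊗ₜ[k] (1:G)) * qL * H.Δ (a2 m)
        = El H (H.φ' * H.ΔR a) := by
          rw [hφ', hΔR, Finset.sum_mul_sum, map_sum]
          simp only [map_sum, El_B H hH]
          rw [Finset.sum_comm]
          refine Finset.sum_congr rfl fun m _ => ?_
          rw [hqL, Finset.mul_sum, Finset.sum_mul]
      _ = El H (H.ΔL a * H.φ') := by rw [inv_intertwine H hH]
      _ = ((1:G) ⊗ₜ[k] a) * qL := by
          rw [hΔL, hφ', Finset.sum_mul_sum, map_sum]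
          simp only [map_sum]
          rw [Finset.sum_comm, hqL, Finset.mul_sum]
          refine Finset.sum_congr rfl fun i _ => ?_
          rw [Algebra.TensorProduct.tmul_mul_tmul, one_mul, ← hεl,
            Finset.sum_mul, TensorProduct.tmul_sum]
          refine Finset.sum_congr rfl fun m _ => ?_
          rw [El_A H hH, AS3_Δ H hH]
          simp [mul_smul_comm, smul_mul_assoc, TensorProduct.smul_tmul',
            TensorProduct.tmul_smul, mul_assoc]
  · -- q_ρ
    calc ∑ m : κ, ((1:G) ⊗ₜ[k] H.S.symm (a2 m)) * qR * H.Δ (a1 m)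
        = Er H (H.φ * H.ΔL a) := by
          rw [hφ, hΔL, Finset.sum_mul_sum, map_sum]
          simp only [map_sum, Er_B H hH]
          rw [Finset.sum_comm]
          refine Finset.sum_congr rfl fun m _ => ?_
          rw [hqR, Finset.mul_sum, Finset.sum_mul]
      _ = Er H (H.ΔR a * H.φ) := by rw [hH.Δ_assoc]
      _ = (a ⊗ₜ[k] (1:G)) * qR := by
          rw [hΔR, hφ, Finset.sum_mul_sum, map_sum]
          simp only [map_sum]
          rw [Finset.sum_comm, hqR, Finset.mul_sum]
          refine Finset.sum_congr rfl fun i _ => ?_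
          rw [Algebra.TensorProduct.tmul_mul_tmul, one_mul, ← hεr,
            Finset.sum_mul, TensorProduct.sum_tmul]
          refine Finset.sum_congr rfl fun m _ => ?_
          rw [Er_A H hH, AS4_Δ H hH]
          simp [Ssymm_mul H hH, mul_smul_comm, smul_mul_assoc,
            TensorProduct.smul_tmul', mul_assoc]
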